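/- Let f be a basic feasible solution, i.e., a positive flow (Bf = b, f ≥ 0) whose support contains no cycle of the underlying undirected graph. Then for every arc e ∈ supp f one has b*_min ≤ f_e ≤ b*_max. -/

import Mathlib

open scoped BigOperators

section PhysarumSetup

variable {V E : Type*} [Fintype V] [Fintype E] [DecidableEq V] [DecidableEq E]

/-- Incidence (boundary) matrix of the digraph given by `tail`/`head`:
`+1` if `i` is the tail of `e`, `-1` if `i` is the head of `e`, `0` otherwise. -/
def incMatrix (tail head : E → V) : Matrix V E ℝ :=
  Matrix.of fun i e => if tail e = i then (1 : ℝ) else if head e = i then -1 else 0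

/-- The digraph has no loops. -/
def NoLoops (tail head : E → V) : Prop := ∀ e, tail e ≠ head e

/-- The digraph has no multiple arcs. -/
def NoMultiple (tail head : E → V) : Prop :=
  ∀ e f, tail e = tail f → head e = head f → e = f

/-- Adjacency in the underlying undirected graph. -/
def Adj (tail head : E → V) (i j : V) : Prop :=
  ∃ e, (tail e = i ∧ head e = j) ∨ (tail e = j ∧ head e = i)

/-- The underlying undirected graph is connected. -/
def IsConnectedGraph (tail head : E → V) : Prop :=
  ∀ i j : V, Relation.ReflTransGen (Adj tail head) i j

/-- `φ` is a flow with source vector `b`: `Bφ = b`. -/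
def IsFlow (tail head : E → V) (b : V → ℝ) (φ : E → ℝ) : Prop :=
  (incMatrix tail head).mulVec φ = b

/-- Net supply `b(S)` of a vertex set `S`. -/
def netSupply (b : V → ℝ) (S : Finset V) : ℝ := ∑ i ∈ S, b i

/-- `b*_max = max_{S ⊆ V} |b(S)|`. -/
noncomputable def bstarMax (b : V → ℝ) : ℝ :=
  sSup {x | ∃ S : Finset V, x = |netSupply b S|}

/-- `b*_min = min { |b(S)| : S ⊆ V, b(S) ≠ 0 }`. -/
noncomputable def bstarMin (b : V → ℝ) : ℝ :=
  sInf {x | ∃ S : Finset V, netSupply b S ≠ 0 ∧ x = |netSupply b S|}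

/-- The support of an arc vector. -/
def suppE (φ : E → ℝ) : Set E := {e | φ e ≠ 0}

/-- An arc set is a forest in the underlying undirected graph:
equivalently, it supports no nonzero circulation. -/
def ForestSupport (tail head : E → V) (s : Set E) : Prop :=
  ∀ γ : E → ℝ, (incMatrix tail head).mulVec γ = 0 → (∀ e, γ e ≠ 0 → e ∈ s) → γ = 0

/-- A basic feasible solution: a positive flow whose support is a forest
in the underlying undirected graph. -/
def IsBFS (tail head : E → V) (b : V → ℝ) (f : E → ℝ) : Prop :=
  IsFlow tail head b f ∧ (∀ e, 0 ≤ f e) ∧ ForestSupport tail head (suppE f)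

/-- A vector is circulation free if its support contains no directed cycle:
equivalently, it supports no nonzero nonnegative circulation. -/
def CirculationFree (tail head : E → V) (φ : E → ℝ) : Prop :=
  ∀ γ : E → ℝ, (incMatrix tail head).mulVec γ = 0 → (∀ e, 0 ≤ γ e) →
    (∀ e, γ e ≠ 0 → φ e ≠ 0) → γ = 0

/-- The weighted graph Laplacian `L(σ) = B · diag(σ/ℓ) · Bᵀ`. -/
noncomputable def lap (tail head : E → V) (ℓ σ : E → ℝ) : Matrix V V ℝ :=
  incMatrix tail head * Matrix.diagonal (fun e => σ e / ℓ e) * (incMatrix tail head).transpose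

/-- The field (slope) of a potential: `Ψ(p)_{ij} = (p_i - p_j)/ℓ_{ij}`. -/
noncomputable def field (tail head : E → V) (ℓ : E → ℝ) (p : V → ℝ) : E → ℝ :=
  fun e => (p (tail e) - p (head e)) / ℓ e

/-- The set of vertices incident to an arc set `H`. -/
def VSet (tail head : E → V) (H : Set E) : Set V :=
  {i | ∃ e ∈ H, tail e = i ∨ head e = i}

/-- Undirected reachability using only arcs in `H`. -/
def UReach (tail head : E → V) (H : Set E) : V → V → Prop :=
  Relation.ReflTransGen
    (fun i j => ∃ e ∈ H, (tail e = i ∧ head e = j) ∨ (tail e = j ∧ head e = i))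

/-- `WalkLen tail head ℓ H i j L`: there is a walk in the underlying undirected
graph of `H` from `i` to `j` of total `ℓ`-length `L`. -/
inductive WalkLen (tail head : E → V) (ℓ : E → ℝ) (H : Set E) : V → V → ℝ → Prop
  | refl (i : V) : WalkLen tail head ℓ H i i 0
  | step {j k : V} {L : ℝ} (i : V) (e : E) (he : e ∈ H)
      (hik : (tail e = i ∧ head e = j) ∨ (tail e = j ∧ head e = i))
      (hw : WalkLen tail head ℓ H j k L) : WalkLen tail head ℓ H i k (ℓ e + L)

/-- The minimal `ℓ`-length of a connecting walk within `H`. -/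
noncomputable def wdist (tail head : E → V) (ℓ : E → ℝ) (H : Set E) (i j : V) : ℝ :=
  sInf {L | WalkLen tail head ℓ H i j L}

/-- The `ℓ`-diameter of `H`: the maximum of `wdist` over pairs of vertices lying in
a common component of `H`. -/
noncomputable def wdiam (tail head : E → V) (ℓ : E → ℝ) (H : Set E) : ℝ :=
  sSup {x | ∃ i j : V, (∃ L, WalkLen tail head ℓ H i j L) ∧ x = wdist tail head ℓ H i j}

/-- Maximum norm of `p` restricted to a vertex set `A`. -/
noncomputable def supNormOn (A : Set V) (p : V → ℝ) : ℝ := sSup {x | ∃ i ∈ A, x = |p i|}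

/-- Maximum norm of an arc vector. -/
noncomputable def eSupNorm (x : E → ℝ) : ℝ := sSup {r | ∃ e : E, r = |x e|}

/-- `min { σ_e : σ_e > 0 }`. -/
noncomputable def minPos (σ : E → ℝ) : ℝ := sInf {x | ∃ e, 0 < σ e ∧ x = σ e}

/-- `min_e ℓ_e`. -/
noncomputable def minLen (ℓ : E → ℝ) : ℝ := sInf {x | ∃ e : E, x = ℓ e}

/-- The cost `ℓᵀφ` of a flow. -/
def cost (ℓ φ : E → ℝ) : ℝ := ∑ e, ℓ e * φ e

/-- The transshipment problem is feasible: there is a positive flow. -/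
def Feasible (tail head : E → V) (b : V → ℝ) : Prop :=
  ∃ φ : E → ℝ, IsFlow tail head b φ ∧ ∀ e, 0 ≤ φ e

/-- `φ` is a minimum-cost positive flow. -/
def IsOptimal (tail head : E → V) (ℓ : E → ℝ) (b : V → ℝ) (φ : E → ℝ) : Prop :=
  IsFlow tail head b φ ∧ (∀ e, 0 ≤ φ e) ∧
    ∀ ψ : E → ℝ, IsFlow tail head b ψ → (∀ e, 0 ≤ ψ e) → cost ℓ φ ≤ cost ℓ ψ

/-- `Ĥ`: the set of arcs carried by some minimum-cost positive flow. -/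
def optSupport (tail head : E → V) (ℓ : E → ℝ) (b : V → ℝ) : Set E :=
  {e | ∃ φ : E → ℝ, IsOptimal tail head ℓ b φ ∧ 0 < φ e}

/-- The current `φ(t) = σ(t)·Ψ(p(t))` of the Physarum solver. -/
noncomputable def current (tail head : E → V) (ℓ : E → ℝ) (σ : ℝ → E → ℝ)
    (p : ℝ → V → ℝ) (t : ℝ) : E → ℝ :=
  fun e => σ t e * field tail head ℓ (p t) e

/-- The Physarum dynamics: `σ(t) > 0` and continuously differentiable on `[0,∞)`,
`L(σ(t)) p(t) = b`, and `σ' = φ - σ` where `φ(t) = σ(t)·Ψ(p(t))`. -/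
structure PhysarumDynamics (tail head : E → V) (ℓ : E → ℝ) (b : V → ℝ)
    (σ : ℝ → E → ℝ) (p : ℝ → V → ℝ) : Prop where
  pos : ∀ t : ℝ, 0 ≤ t → ∀ e, 0 < σ t e
  kirchhoff : ∀ t : ℝ, 0 ≤ t → (lap tail head ℓ (σ t)).mulVec (p t) = b
  contp : ContinuousOn (fun t => p t) (Set.Ici (0 : ℝ))
  dyn : ∀ t ∈ Set.Ici (0 : ℝ), ∀ e : E,
    HasDerivWithinAt (fun s => σ s e)
      (current tail head ℓ σ p t e - σ t e) (Set.Ici (0 : ℝ)) t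

/-- A directed walk from `i` to `j` using the listed arcs in order. -/
inductive DiWalk (tail head : E → V) : V → V → List E → Prop
  | nil (i : V) : DiWalk tail head i i []
  | cons {j k : V} {es : List E} (i : V) (e : E) (h1 : tail e = i) (h2 : head e = j)
      (hw : DiWalk tail head j k es) : DiWalk tail head i k (e :: es)

/-- Discrete `∞`-harmonicity of `p` at node `i` with respect to the arc set `H`:
the maximal in-slope equals the maximal out-slope, and both are nonnegative. -/
noncomputable def InfHarmAt (tail head : E → V) (ℓ : E → ℝ) (H : Set E)
    (p : V → ℝ) (i : V) : Prop :=
  sSup {r | ∃ e ∈ H, head e = i ∧ r = (p (tail e) - p i) / ℓ e}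
    = sSup {r | ∃ e ∈ H, tail e = i ∧ r = (p i - p (head e)) / ℓ e}
  ∧ 0 ≤ sSup {r | ∃ e ∈ H, tail e = i ∧ r = (p i - p (head e)) / ℓ e}

end PhysarumSetup

section AuxProof

variable {V E : Type*} [Fintype V] [Fintype E] [DecidableEq V] [DecidableEq E]

lemma mulVec_single_aux (tail head : E → V) (hloops : NoLoops tail head) (e0 : E) (c : ℝ) :
    (incMatrix tail head).mulVec (fun e => if e = e0 then c else 0)
      = fun v => c * ((if v = tail e0 then 1 else 0) - (if v = head e0 then 1 else 0)) := by
  funext v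
  have h1 : (incMatrix tail head).mulVec (fun e => if e = e0 then c else 0) v
      = incMatrix tail head v e0 * c := by
    simp [Matrix.mulVec, dotProduct, mul_ite]
  rw [h1]
  have hl := hloops e0
  simp only [incMatrix, Matrix.of_apply]
  by_cases h2 : v = tail e0
  · have h4 : v ≠ head e0 := fun h => hl (h2.symm.trans h)
    rw [if_pos h2.symm, if_pos h2, if_neg h4]
    ring
  · by_cases h3 : v = head e0
    · have h2' : ¬ tail e0 = v := fun h => h2 h.symm
      rw [if_neg h2', if_pos h3.symm, if_neg h2, if_pos h3]
      ring
    · have h2' : ¬ tail e0 = v := fun h => h2 h.symm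
      have h3' : ¬ head e0 = v := fun h => h3 h.symm
      rw [if_neg h2', if_neg h3', if_neg h2, if_neg h3]
      ring

lemma walk_to_vec (tail head : E → V) (hloops : NoLoops tail head) (K : Set E)
    {i j : V}
    (h : Relation.ReflTransGen
      (fun a c => ∃ e ∈ K, (tail e = a ∧ head e = c) ∨ (tail e = c ∧ head e = a)) i j) :
    ∃ γ : E → ℝ, (incMatrix tail head).mulVec γ =
      (fun v => (if v = i then 1 else 0) - (if v = j then 1 else 0)) ∧
      ∀ e, γ e ≠ 0 → e ∈ K := by
  induction h with
  | refl =>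
      refine ⟨0, ?_, by simp⟩
      funext v; simp [Matrix.mulVec_zero]
  | @tail bmid c hab hbc ih =>
      obtain ⟨γ, hγ, hs⟩ := ih
      obtain ⟨e, heK, hcase⟩ := hbc
      rcases hcase with ⟨h1, h2⟩ | ⟨h1, h2⟩
      · refine ⟨γ + (fun e' => if e' = e then (1:ℝ) else 0), ?_, ?_⟩
        · rw [Matrix.mulVec_add, hγ, mulVec_single_aux tail head hloops]
          funext v
          simp only [Pi.add_apply, h1, h2]
          ring
        · intro e' he'
          by_cases h3 : e' = e
          · exact h3 ▸ heK
          · apply hs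
            simpa [h3] using he'
      · refine ⟨γ + (fun e' => if e' = e then (-1:ℝ) else 0), ?_, ?_⟩
        · rw [Matrix.mulVec_add, hγ, mulVec_single_aux tail head hloops]
          funext v
          simp only [Pi.add_apply, h1, h2]
          ring
        · intro e' he'
          by_cases h3 : e' = e
          · exact h3 ▸ heK
          · apply hs
            simpa [h3] using he'

end AuxProof

theorem statement_1 {V E : Type*} [Fintype V] [Fintype E] [DecidableEq V] [DecidableEq E]
    (tail head : E → V)
    (hloops : NoLoops tail head) (hmult : NoMultiple tail head)
    (hconn : IsConnectedGraph tail head)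
    (b : V → ℝ) (hb : ∑ i, b i = 0)
    (f : E → ℝ) (hf : IsBFS tail head b f) :
    ∀ e : E, f e ≠ 0 → bstarMin b ≤ f e ∧ f e ≤ bstarMax b := by
  classical
  intro e hfe
  obtain ⟨hflow, hnn, hforest⟩ := hf
  have hfe_pos : 0 < f e := lt_of_le_of_ne (hnn e) (Ne.symm hfe)
  set K : Set E := suppE f \ {e} with hK
  set R : V → V → Prop := fun a c =>
    ∃ e' ∈ K, (tail e' = a ∧ head e' = c) ∨ (tail e' = c ∧ head e' = a) with hRdef
  set S : Finset V := Finset.univ.filter (fun v => Relation.ReflTransGen R (tail e) v) with hSdef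
  have hmemS : ∀ v, v ∈ S ↔ Relation.ReflTransGen R (tail e) v := by
    intro v; simp [hSdef]
  have htailS : tail e ∈ S := (hmemS _).mpr Relation.ReflTransGen.refl
  -- head e ∉ S
  have hheadS : head e ∉ S := by
    intro hmem
    have hreach := (hmemS _).mp hmem
    obtain ⟨γ', hγ', hs'⟩ := walk_to_vec tail head hloops K hreach
    have hγ'e : γ' e = 0 := by
      by_contra h
      exact ((hs' e h).2 rfl).elim
    set γ : E → ℝ := γ' + (fun e' => if e' = e then (-1:ℝ) else 0) with hγdef
    have hcirc : (incMatrix tail head).mulVec γ = 0 := by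
      rw [hγdef, Matrix.mulVec_add, hγ', mulVec_single_aux tail head hloops]
      funext v
      simp only [Pi.add_apply, Pi.zero_apply]
      ring
    have hsupp : ∀ e', γ e' ≠ 0 → e' ∈ suppE f := by
      intro e' he'
      by_cases h3 : e' = e
      · exact h3 ▸ hfe
      · have : γ' e' ≠ 0 := by
          simpa [hγdef, h3] using he'
        exact (hs' e' this).1
    have hzero := hforest γ hcirc hsupp
    have : γ e = -1 := by simp [hγdef, hγ'e]
    rw [hzero] at this
    norm_num at this
  -- closure of S under support edges other than e
  have hclosed : ∀ e' ∈ K, (tail e' ∈ S ↔ head e' ∈ S) := by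
    intro e' he'
    constructor
    · intro h
      exact (hmemS _).mpr (Relation.ReflTransGen.tail ((hmemS _).mp h)
        ⟨e', he', Or.inl ⟨rfl, rfl⟩⟩)
    · intro h
      exact (hmemS _).mpr (Relation.ReflTransGen.tail ((hmemS _).mp h)
        ⟨e', he', Or.inr ⟨rfl, rfl⟩⟩)
  -- cut identity: netSupply b S = f e
  have hcut : netSupply b S = f e := by
    have hb' : ∀ i, b i = ∑ e', incMatrix tail head i e' * f e' := by
      intro i
      rw [← hflow]
      rfl
    have hcol : ∀ e', (∑ i ∈ S, incMatrix tail head i e')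
        = (if tail e' ∈ S then (1:ℝ) else 0) - (if head e' ∈ S then 1 else 0) := by
      intro e'
      have hrow : ∀ i, incMatrix tail head i e'
          = (if tail e' = i then (1:ℝ) else 0) - (if head e' = i then 1 else 0) := by
        intro i
        have hl := hloops e'
        simp only [incMatrix, Matrix.of_apply]
        by_cases h2 : tail e' = i
        · have : ¬ head e' = i := fun h => hl (h2.trans h.symm)
          simp [h2, this]
        · by_cases h3 : head e' = i <;> simp [h2, h3]
      calc (∑ i ∈ S, incMatrix tail head i e')
          = ∑ i ∈ S, ((if tail e' = i then (1:ℝ) else 0) - (if head e' = i then 1 else 0)) := by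
            exact Finset.sum_congr rfl (fun i _ => hrow i)
        _ = (∑ i ∈ S, if tail e' = i then (1:ℝ) else 0)
            - (∑ i ∈ S, if head e' = i then (1:ℝ) else 0) := Finset.sum_sub_distrib _ _
        _ = (if tail e' ∈ S then (1:ℝ) else 0) - (if head e' ∈ S then 1 else 0) := by
            rw [Finset.sum_ite_eq, Finset.sum_ite_eq]
    calc netSupply b S = ∑ i ∈ S, ∑ e', incMatrix tail head i e' * f e' :=
          Finset.sum_congr rfl (fun i _ => hb' i)
      _ = ∑ e', ∑ i ∈ S, incMatrix tail head i e' * f e' := Finset.sum_comm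
      _ = ∑ e', ((if tail e' ∈ S then (1:ℝ) else 0) - (if head e' ∈ S then 1 else 0)) * f e' := by
          refine Finset.sum_congr rfl (fun e' _ => ?_)
          rw [← Finset.sum_mul, hcol]
      _ = f e := by
          rw [Finset.sum_eq_single_of_mem e (Finset.mem_univ e)]
          · simp [htailS, hheadS]
          · intro e' _ hne
            by_cases hfz : f e' = 0
            · simp [hfz]
            · have he'K : e' ∈ K := ⟨hfz, hne⟩
              rcases (hclosed e' he'K) with hiff
              by_cases ht : tail e' ∈ S
              · simp [ht, hiff.mp ht]
              · have hh : head e' ∉ S := fun h => ht (hiff.mpr h)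
                simp [ht, hh]
  constructor
  · -- bstarMin b ≤ f e
    have hmem : f e ∈ {x | ∃ S : Finset V, netSupply b S ≠ 0 ∧ x = |netSupply b S|} := by
      refine ⟨S, ?_, ?_⟩
      · rw [hcut]; exact hfe
      · rw [hcut, abs_of_nonneg (hnn e)]
    have hbdd : BddBelow {x | ∃ S : Finset V, netSupply b S ≠ 0 ∧ x = |netSupply b S|} := by
      refine ⟨0, ?_⟩
      rintro x ⟨T, -, rfl⟩
      exact abs_nonneg _
    exact csInf_le hbdd hmem
  · -- f e ≤ bstarMax b
    have hfin : ({x | ∃ S : Finset V, x = |netSupply b S|} : Set ℝ).Finite := by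
      have : {x | ∃ S : Finset V, x = |netSupply b S|}
          = Set.range (fun S : Finset V => |netSupply b S|) := by
        ext x; simp [Set.range, eq_comm]
      rw [this]
      exact Set.finite_range _
    have hmem : f e ∈ {x | ∃ S : Finset V, x = |netSupply b S|} := by
      exact ⟨S, by rw [hcut, abs_of_nonneg (hnn e)]⟩
    exact le_csSup hfin.bddAbove hmem
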